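/- Monotone sequence compression: let s = ⟨c₁,d₁⟩⋯⟨c_n,d_n⟩ be a monotonically increasing reactive sequence (CT ⊨ d_j → c_j for all j and CT ⊨ c_{i+1} → d_i for all i), let X be a set of variables, and let η(s, X) be obtained by (1) existentially quantifying all variables outside X in each constraint, (2) deleting all stuttering pairs ⟨c,d⟩ with c ↔ d except the last, and (3) repeatedly fusing consecutive pairs ⟨c_l,d_l⟩⟨c_{l+1},d_{l+1}⟩ with d_l → c_{l+1} into ⟨c_l,d_{l+1}⟩. Then η(s, X) is a strictly increasing reactive sequence with respect to X. -/

import Mathlib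

open Classical

variable {V D : Type*}

/-- A constraint (modeled semantically as its set of solutions, i.e. valuations `V → D`)
has its free variables among `X` if it only depends on the values of variables in `X`. -/
def ConstraintDependsOn (X : Set V) (c : Set (V → D)) : Prop :=
  ∀ v w : V → D, (∀ x ∈ X, v x = w x) → (v ∈ c ↔ w ∈ c)

/-- Existential quantification of all variables outside `X` (the operation `∃_{-X}`). -/
def proj (X : Set V) (c : Set (V → D)) : Set (V → D) :=
  {v : V → D | ∃ w ∈ c, ∀ x ∈ X, w x = v x}

/-- Step (2) of `η`: delete all stuttering pairs `⟨c,d⟩` with `c ↔ d`, except the last one. -/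
noncomputable def removeStutter (l : List (Set (V → D) × Set (V → D))) :
    List (Set (V → D) × Set (V → D)) :=
  l.dropLast.filter (fun p => decide (p.1 ≠ p.2)) ++ l.drop (l.length - 1)

/-- One fusion step (3) of `η`: two consecutive pairs `⟨c,d⟩⟨c',d'⟩` with `d → c'`
(semantically `d ⊆ c'`) are replaced by `⟨c,d'⟩`. -/
inductive FuseStep :
    List (Set (V → D) × Set (V → D)) → List (Set (V → D) × Set (V → D)) → Prop
  | fuse (l₁ l₂ : List (Set (V → D) × Set (V → D))) (c d c' d' : Set (V → D))
      (h : d ⊆ c') : FuseStep (l₁ ++ (c, d) :: (c', d') :: l₂) (l₁ ++ (c, d') :: l₂)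

/-- A reactive sequence is strictly increasing w.r.t. `X`: all constraints have free
variables in `X`, each `d_j` entails `c_j`, each `c_{i+1}` entails `d_i` but `d_i` does not
entail `c_{i+1}`, and `c_i` does not entail `d_i` (for `i < n`). -/
def StrictlyIncreasing (X : Set V) (l : List (Set (V → D) × Set (V → D))) : Prop :=
  (∀ p ∈ l, ConstraintDependsOn X p.1 ∧ ConstraintDependsOn X p.2 ∧ p.2 ⊆ p.1) ∧
  ∀ (i : ℕ) (h : i + 1 < l.length),
    (l.get ⟨i + 1, h⟩).1 ⊆ (l.get ⟨i, by omega⟩).2 ∧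
    ¬ (l.get ⟨i, by omega⟩).2 ⊆ (l.get ⟨i + 1, h⟩).1 ∧
    ¬ (l.get ⟨i, by omega⟩).1 ⊆ (l.get ⟨i, by omega⟩).2

/-- Auxiliary link relation between consecutive pairs. -/
def Rlink : (Set (V → D) × Set (V → D)) → (Set (V → D) × Set (V → D)) → Prop :=
  fun p q => q.1 ⊆ p.2 ∧ q.2 ⊆ p.2

instance : IsTrans (Set (V → D) × Set (V → D)) Rlink :=
  ⟨fun _ q _ h1 h2 => ⟨h2.1.trans h1.2, h2.2.trans h1.2⟩⟩

/-- Invariant preserved through the compression process. -/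
def EtaInv (X : Set V) (l : List (Set (V → D) × Set (V → D))) : Prop :=
  (∀ p ∈ l, ConstraintDependsOn X p.1 ∧ ConstraintDependsOn X p.2 ∧ p.2 ⊆ p.1) ∧
  List.IsChain Rlink l ∧
  ∀ p ∈ l.dropLast, p.1 ≠ p.2

lemma dependsOn_proj (X : Set V) (c : Set (V → D)) : ConstraintDependsOn X (proj X c) := by
  intro v w hvw
  simp only [proj, Set.mem_setOf_eq]
  constructor
  · rintro ⟨u, hu, h⟩
    exact ⟨u, hu, fun x hx => (h x hx).trans (hvw x hx)⟩
  · rintro ⟨u, hu, h⟩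
    exact ⟨u, hu, fun x hx => (h x hx).trans (hvw x hx).symm⟩

lemma proj_mono (X : Set V) {c c' : Set (V → D)} (h : c ⊆ c') : proj X c ⊆ proj X c' := by
  rintro v ⟨u, hu, hux⟩
  exact ⟨u, h hu, hux⟩

lemma fuse_inv {X : Set V} {l l' : List (Set (V → D) × Set (V → D))}
    (hinv : EtaInv X l) (hf : FuseStep l l') : EtaInv X l' := by
  obtain ⟨l₁, l₂, c, d, c', d', hdc'⟩ := hf
  obtain ⟨h1, h2, h3⟩ := hinv
  rw [List.isChain_append] at h2
  obtain ⟨hc1, hc2, hbd⟩ := h2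
  rw [List.isChain_cons] at hc2
  obtain ⟨hR1, hc3⟩ := hc2
  have hRcd : Rlink (c, d) (c', d') := hR1 _ rfl
  rw [List.isChain_cons] at hc3
  obtain ⟨hR2, hc4⟩ := hc3
  have hdc : d ⊆ c := (h1 (c, d) (by simp)).2.2
  refine ⟨?_, ?_, ?_⟩
  · intro p hp
    rcases List.mem_append.1 hp with hp | hp
    · exact h1 p (by simp [hp])
    · rcases List.mem_cons.1 hp with rfl | hp
      · have hcd := h1 (c, d) (by simp)
        have hcd' := h1 (c', d') (by simp)
        exact ⟨hcd.1, hcd'.2.1, fun x hx => hdc (hRcd.2 hx)⟩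
      · exact h1 p (by simp [hp])
  · rw [List.isChain_append, List.isChain_cons]
    refine ⟨hc1, ⟨fun y hy => hR2 y hy, hc4⟩, fun x hx y hy => ?_⟩
    have hb := hbd x hx (c, d) rfl
    simp only [List.head?_cons, Option.mem_def, Option.some.injEq] at hy
    subst hy
    exact ⟨hb.1, hRcd.2.trans hb.2⟩
  · -- no stuttering pairs except possibly the last one
    have hne : c ≠ d' := by
      intro hcd'
      have hceq : c = d := le_antisymm (hcd' ▸ hRcd.2 : c ⊆ d) hdc
      have : (c, d) ∈ (l₁ ++ (c, d) :: (c', d') :: l₂).dropLast := by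
        rw [List.dropLast_append_of_ne_nil (by simp)]
        simp
      exact h3 _ this hceq
    rcases List.eq_nil_or_concat l₂ with rfl | ⟨L, b, rfl⟩
    · intro p hp
      rw [show (l₁ ++ [(c, d')]).dropLast = l₁ from List.dropLast_concat] at hp
      apply h3
      rw [List.dropLast_append_of_ne_nil (by simp)]
      exact List.mem_append_left _ hp
    · intro p hp
      rw [List.dropLast_append_of_ne_nil (by simp)] at hp
      have hold : ∀ q ∈ (l₁ ++ (c, d) :: (c', d') :: L.concat b).dropLast, q.1 ≠ q.2 := h3
      rw [List.dropLast_append_of_ne_nil (by simp)] at hold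
      rw [List.dropLast_cons_of_ne_nil (by simp)] at hp
      rcases List.mem_append.1 hp with hp | hp
      · exact hold p (List.mem_append_left _ hp)
      · rcases List.mem_cons.1 hp with rfl | hp
        · exact hne
        · rw [List.concat_eq_append, List.dropLast_concat] at hp
          apply hold
          rw [List.dropLast_cons_of_ne_nil (by simp), List.dropLast_cons_of_ne_nil (by simp),
            List.concat_eq_append, List.dropLast_concat]
          exact List.mem_append_right _ (by simp [hp])

lemma removeStutter_inv {X : Set V} {l : List (Set (V → D) × Set (V → D))}
    (h1 : ∀ p ∈ l, ConstraintDependsOn X p.1 ∧ ConstraintDependsOn X p.2 ∧ p.2 ⊆ p.1)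
    (h2 : List.IsChain Rlink l) : EtaInv X (removeStutter l) := by
  have hsub : (removeStutter l).Sublist l := by
    unfold removeStutter
    rw [List.dropLast_eq_take]
    conv_rhs => rw [← List.take_append_drop (l.length - 1) l]
    exact List.Sublist.append List.filter_sublist (List.Sublist.refl _)
  refine ⟨fun p hp => h1 p (hsub.subset hp), h2.sublist hsub, ?_⟩
  rcases List.eq_nil_or_concat l with rfl | ⟨L, b, rfl⟩
  · simp [removeStutter]
  · simp only [List.concat_eq_append]
    unfold removeStutter
    rw [List.dropLast_concat, List.length_append, List.length_singleton,
      Nat.add_sub_cancel, List.drop_left, List.dropLast_concat]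
    intro p hp
    have := List.of_mem_filter hp
    simpa using this

lemma inv_s' {X : Set V} {s : List (Set (V → D) × Set (V → D))}
    (hmono₁ : ∀ p ∈ s, p.2 ⊆ p.1)
    (hmono₂ : ∀ (i : ℕ) (h : i + 1 < s.length),
      (s.get ⟨i + 1, h⟩).1 ⊆ (s.get ⟨i, by omega⟩).2) :
    (∀ p ∈ s.map (fun p => (proj X p.1, proj X p.2)),
      ConstraintDependsOn X p.1 ∧ ConstraintDependsOn X p.2 ∧ p.2 ⊆ p.1) ∧
    List.IsChain Rlink (s.map (fun p => (proj X p.1, proj X p.2))) := by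
  constructor
  · intro p hp
    obtain ⟨q, hq, rfl⟩ := List.mem_map.1 hp
    exact ⟨dependsOn_proj X q.1, dependsOn_proj X q.2, proj_mono X (hmono₁ q hq)⟩
  · rw [List.isChain_map, List.isChain_iff_getElem]
    intro i hi
    have hlen : i + 1 < s.length := by omega
    have hlink := hmono₂ i hlen
    have hsub : (s.get ⟨i + 1, hlen⟩).2 ⊆ (s.get ⟨i + 1, hlen⟩).1 :=
      hmono₁ _ (List.get_mem s _)
    exact ⟨proj_mono X hlink, proj_mono X (hsub.trans hlink)⟩

/-- The operator `η` applied to a monotonically increasing reactive sequence yields a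
strictly increasing reactive sequence with respect to `X`. -/
theorem stmt_16 (X : Set V) (s : List (Set (V → D) × Set (V → D)))
    (hmono₁ : ∀ p ∈ s, p.2 ⊆ p.1)
    (hmono₂ : ∀ (i : ℕ) (h : i + 1 < s.length),
      (s.get ⟨i + 1, h⟩).1 ⊆ (s.get ⟨i, by omega⟩).2)
    (s' s'' s''' : List (Set (V → D) × Set (V → D)))
    (hs' : s' = s.map (fun p => (proj X p.1, proj X p.2)))
    (hs'' : s'' = removeStutter s')
    (hs''' : Relation.ReflTransGen FuseStep s'' s''')
    (hclosed : ∀ t, ¬ FuseStep s''' t) :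
    StrictlyIncreasing X s''' := by
  have hstart : EtaInv X s'' := by
    obtain ⟨ha, hb⟩ := inv_s' (X := X) hmono₁ hmono₂
    rw [hs'', hs']
    exact removeStutter_inv ha hb
  have hinv : EtaInv X s''' := by
    clear hclosed
    induction hs''' with
    | refl => exact hstart
    | tail _ hstep ih => exact fuse_inv ih hstep
  obtain ⟨h1, h2, h3⟩ := hinv
  refine ⟨h1, fun i hi => ?_⟩
  have hlink := (List.isChain_iff_getElem.1 h2) i (by omega)
  refine ⟨hlink.1, ?_, ?_⟩
  · intro hsubdc
    have hdecomp : s''' = s'''.take i ++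
        ((s'''.get ⟨i, by omega⟩).1, (s'''.get ⟨i, by omega⟩).2) ::
        ((s'''.get ⟨i + 1, hi⟩).1, (s'''.get ⟨i + 1, hi⟩).2) :: s'''.drop (i + 2) := by
      conv_lhs => rw [← List.take_append_drop i s''']
      congr 1
      rw [List.drop_eq_getElem_cons (by omega : i < s'''.length),
        List.drop_eq_getElem_cons (by omega : i + 1 < s'''.length)]
      simp [List.get_eq_getElem]
    have hstep := FuseStep.fuse (s'''.take i) (s'''.drop (i + 2))
      (s'''.get ⟨i, by omega⟩).1 (s'''.get ⟨i, by omega⟩).2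
      (s'''.get ⟨i + 1, hi⟩).1 (s'''.get ⟨i + 1, hi⟩).2 hsubdc
    rw [← hdecomp] at hstep
    exact hclosed _ hstep
  · intro hsubcd
    have hdlen : i < s'''.dropLast.length := by
      rw [List.length_dropLast]; omega
    have hmem : s'''.get ⟨i, by omega⟩ ∈ s'''.dropLast := by
      have : s'''.dropLast[i]'hdlen = s'''[i]'(by omega) :=
        List.getElem_dropLast hdlen
      rw [List.get_eq_getElem, ← this]
      exact List.getElem_mem hdlen
    have hdc : (s'''.get ⟨i, by omega⟩).2 ⊆ (s'''.get ⟨i, by omega⟩).1 :=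
      (h1 _ (List.get_mem s''' _)).2.2
    exact h3 _ hmem (le_antisymm hsubcd hdc)
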